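/- (Finsler–Thorpe trick, nonnegative version; Proposition 2.2 of the paper in coordinates.) Let r : Fin 4 → Fin 4 → Fin 4 → Fin 4 → ℝ be an algebraic curvature tensor in coordinates: r i j k l = −r j i k l = −r i j l k, r i j k l = r k l i j, and r i j k l + r j k i l + r k i j l = 0. For an antisymmetric ω : Fin 4 → Fin 4 → ℝ set Q(ω) := (1/4)·Σ_{i,j,k,l} r i j k l · ω i j · ω l k and P(ω) := ω 0 1 · ω 2 3 − ω 0 2 · ω 1 3 + ω 0 3 · ω 1 2. Then the following are equivalent: (i) Σ_{i,j,k,l} r i j k l · x i · y j · y k · x l ≥ 0 for all x, y : Fin 4 → ℝ (i.e., sec ≥ 0); (ii) there exists τ ∈ ℝ such that Q(ω) + τ·P(ω) ≥ 0 for every antisymmetric ω : Fin 4 → Fin 4 → ℝ. -/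

import Mathlib

open Finset

/-! ### Auxiliary machinery for the Finsler–Thorpe trick -/

lemma fin4_cases (i : Fin 4) : i = 0 ∨ i = 1 ∨ i = 2 ∨ i = 3 := by omega

/-- Quadruple sum over `Fin 4`. -/
def S4 (g : Fin 4 → Fin 4 → Fin 4 → Fin 4 → ℝ) : ℝ :=
  ∑ i, ∑ j, ∑ k, ∑ l, g i j k l

lemma S4_add (f g : Fin 4 → Fin 4 → Fin 4 → Fin 4 → ℝ) :
    S4 (fun i j k l => f i j k l + g i j k l) = S4 f + S4 g := by
  simp [S4, Finset.sum_add_distrib]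

lemma S4_smul (c : ℝ) (f : Fin 4 → Fin 4 → Fin 4 → Fin 4 → ℝ) :
    S4 (fun i j k l => c * f i j k l) = c * S4 f := by
  simp [S4, Finset.mul_sum]

lemma S4_neg (f : Fin 4 → Fin 4 → Fin 4 → Fin 4 → ℝ) :
    S4 (fun i j k l => -f i j k l) = -S4 f := by
  simp [S4]

lemma S4_congr {f g : Fin 4 → Fin 4 → Fin 4 → Fin 4 → ℝ}
    (h : ∀ i j k l, f i j k l = g i j k l) : S4 f = S4 g := by
  simp only [S4, h]

lemma S4_swap12 (g : Fin 4 → Fin 4 → Fin 4 → Fin 4 → ℝ) :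
    S4 g = S4 (fun i j k l => g j i k l) := by
  unfold S4; exact Finset.sum_comm

lemma S4_swap34 (g : Fin 4 → Fin 4 → Fin 4 → Fin 4 → ℝ) :
    S4 g = S4 (fun i j k l => g i j l k) := by
  unfold S4
  exact Finset.sum_congr rfl fun i _ => Finset.sum_congr rfl fun j _ =>
    Finset.sum_comm

/-- The Pfaffian-type quadratic form on antisymmetric matrices. -/
def Pw (ω : Fin 4 → Fin 4 → ℝ) : ℝ :=
  ω 0 1 * ω 2 3 - ω 0 2 * ω 1 3 + ω 0 3 * ω 1 2

/-- The curvature-operator quadratic form. -/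
noncomputable def Qr (r : Fin 4 → Fin 4 → Fin 4 → Fin 4 → ℝ) (ω : Fin 4 → Fin 4 → ℝ) : ℝ :=
  (1 / 4) * S4 (fun i j k l => r i j k l * ω i j * ω l k)

/-- `Q` on a wedge equals four times the sectional curvature numerator. -/
lemma Q_wedge (r : Fin 4 → Fin 4 → Fin 4 → Fin 4 → ℝ)
    (hr1 : ∀ i j k l, r i j k l = -r j i k l)
    (hr2 : ∀ i j k l, r i j k l = -r i j l k)
    (x y : Fin 4 → ℝ) :
    S4 (fun i j k l => r i j k l * (x i * y j - x j * y i) * (x l * y k - x k * y l))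
      = 4 * S4 (fun i j k l => r i j k l * x i * y j * y k * x l) := by
  set T := S4 (fun i j k l => r i j k l * x i * y j * y k * x l) with hT
  have h1 : S4 (fun i j k l => r i j k l * (x i * y j) * (x l * y k)) = T := by
    rw [hT]; exact S4_congr fun i j k l => by ring
  have h2 : S4 (fun i j k l => r i j k l * (x i * y j) * (x k * y l)) = -T := by
    rw [S4_swap34 (fun i j k l => r i j k l * (x i * y j) * (x k * y l))]
    rw [show (fun i j k l => r i j l k * (x i * y j) * (x l * y k))
        = (fun i j k l => -(r i j k l * (x i * y j) * (x l * y k))) from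
      funext fun i => funext fun j => funext fun k => funext fun l => by
        rw [hr2 i j l k]; ring]
    rw [S4_neg, h1]
  have h3 : S4 (fun i j k l => r i j k l * (x j * y i) * (x l * y k)) = -T := by
    rw [S4_swap12 (fun i j k l => r i j k l * (x j * y i) * (x l * y k))]
    rw [show (fun i j k l => r j i k l * (x i * y j) * (x l * y k))
        = (fun i j k l => -(r i j k l * (x i * y j) * (x l * y k))) from
      funext fun i => funext fun j => funext fun k => funext fun l => by
        rw [hr1 j i k l]; ring]
    rw [S4_neg, h1]
  have h4 : S4 (fun i j k l => r i j k l * (x j * y i) * (x k * y l)) = T := by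
    rw [S4_swap12 (fun i j k l => r i j k l * (x j * y i) * (x k * y l))]
    rw [show (fun i j k l => r j i k l * (x i * y j) * (x k * y l))
        = (fun i j k l => -(r i j k l * (x i * y j) * (x k * y l))) from
      funext fun i => funext fun j => funext fun k => funext fun l => by
        rw [hr1 j i k l]; ring]
    rw [S4_neg, h2]; ring
  have expand : S4 (fun i j k l =>
        r i j k l * (x i * y j - x j * y i) * (x l * y k - x k * y l))
      = S4 (fun i j k l =>
          r i j k l * (x i * y j) * (x l * y k) + (-(r i j k l * (x i * y j) * (x k * y l))
          + (-(r i j k l * (x j * y i) * (x l * y k))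
            + r i j k l * (x j * y i) * (x k * y l)))) :=
    S4_congr fun i j k l => by ring
  rw [expand, S4_add, S4_add, S4_add, S4_neg, S4_neg, h1, h2, h3, h4]
  ring

/-- Expansion of `Q` on an orthogonal pair of combinations. -/
lemma Q_pair (r : Fin 4 → Fin 4 → Fin 4 → Fin 4 → ℝ) (a b : Fin 4 → Fin 4 → ℝ) (c s : ℝ) :
    S4 (fun i j k l => r i j k l * (c * a i j + s * b i j) * (c * a l k + s * b l k))
      + S4 (fun i j k l => r i j k l * (s * a i j - c * b i j) * (s * a l k - c * b l k))
      = (c ^ 2 + s ^ 2) * (S4 (fun i j k l => r i j k l * a i j * a l k)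
          + S4 (fun i j k l => r i j k l * b i j * b l k)) := by
  rw [← S4_add]
  rw [show (fun i j k l =>
      r i j k l * (c * a i j + s * b i j) * (c * a l k + s * b l k)
        + r i j k l * (s * a i j - c * b i j) * (s * a l k - c * b l k))
      = (fun i j k l => (c ^ 2 + s ^ 2) *
          (r i j k l * a i j * a l k + r i j k l * b i j * b l k)) from
    funext fun i => funext fun j => funext fun k => funext fun l => by ring]
  rw [S4_smul, S4_add]

lemma Q_smul (r : Fin 4 → Fin 4 → Fin 4 → Fin 4 → ℝ) (ω : Fin 4 → Fin 4 → ℝ) (t : ℝ) :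
    S4 (fun i j k l => r i j k l * (t * ω i j) * (t * ω l k))
      = t ^ 2 * S4 (fun i j k l => r i j k l * ω i j * ω l k) := by
  rw [show (fun i j k l => r i j k l * (t * ω i j) * (t * ω l k))
      = (fun i j k l => t ^ 2 * (r i j k l * ω i j * ω l k)) from
    funext fun i => funext fun j => funext fun k => funext fun l => by ring]
  rw [S4_smul]

/-- Plücker: an antisymmetric `ω` with vanishing Pfaffian is decomposable. -/
lemma plucker (ω : Fin 4 → Fin 4 → ℝ) (hAS : ∀ i j, ω i j = -ω j i)
    (hP : ω 0 1 * ω 2 3 - ω 0 2 * ω 1 3 + ω 0 3 * ω 1 2 = 0) :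
    ∃ x y : Fin 4 → ℝ, ∀ i j, ω i j = x i * y j - x j * y i := by
  have h00 : ω 0 0 = 0 := by have := hAS 0 0; linarith
  have h11 : ω 1 1 = 0 := by have := hAS 1 1; linarith
  have h22 : ω 2 2 = 0 := by have := hAS 2 2; linarith
  have h33 : ω 3 3 = 0 := by have := hAS 3 3; linarith
  have h10 : ω 1 0 = -ω 0 1 := hAS 1 0
  have h20 : ω 2 0 = -ω 0 2 := hAS 2 0
  have h30 : ω 3 0 = -ω 0 3 := hAS 3 0
  have h21 : ω 2 1 = -ω 1 2 := hAS 2 1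
  have h31 : ω 3 1 = -ω 1 3 := hAS 3 1
  have h32 : ω 3 2 = -ω 2 3 := hAS 3 2
  rcases eq_or_ne (ω 0 1) 0 with hz01 | ha
  · rcases eq_or_ne (ω 0 2) 0 with hz02 | ha
    · rcases eq_or_ne (ω 0 3) 0 with hz03 | ha
      · rcases eq_or_ne (ω 1 2) 0 with hz12 | ha
        · rcases eq_or_ne (ω 1 3) 0 with hz13 | ha
          · rcases eq_or_ne (ω 2 3) 0 with hz23 | ha
            · refine ⟨fun _ => 0, fun _ => 0, fun i j => ?_⟩
              rcases fin4_cases i with rfl | rfl | rfl | rfl <;>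
                rcases fin4_cases j with rfl | rfl | rfl | rfl <;>
                simp only [h00, h11, h22, h33, h10, h20, h30, h21, h31, h32,
                  hz01, hz02, hz03, hz12, hz13, hz23] <;> norm_num
            · refine ⟨fun i => ω i 2 / ω 2 3, fun i => ω i 3, fun i j => ?_⟩
              rcases fin4_cases i with rfl | rfl | rfl | rfl <;>
                rcases fin4_cases j with rfl | rfl | rfl | rfl <;>
                simp only [h00, h11, h22, h33, h10, h20, h30, h21, h31, h32] <;>
                simp only [div_mul_eq_mul_div, div_sub_div_same] <;> rw [eq_div_iff ha] <;>
                (first | ring1 | linear_combination hP | linear_combination -hP)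
          · refine ⟨fun i => ω i 1 / ω 1 3, fun i => ω i 3, fun i j => ?_⟩
            rcases fin4_cases i with rfl | rfl | rfl | rfl <;>
              rcases fin4_cases j with rfl | rfl | rfl | rfl <;>
              simp only [h00, h11, h22, h33, h10, h20, h30, h21, h31, h32] <;>
              simp only [div_mul_eq_mul_div, div_sub_div_same] <;> rw [eq_div_iff ha] <;>
              (first | ring1 | linear_combination hP | linear_combination -hP)
        · refine ⟨fun i => ω i 1 / ω 1 2, fun i => ω i 2, fun i j => ?_⟩
          rcases fin4_cases i with rfl | rfl | rfl | rfl <;>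
            rcases fin4_cases j with rfl | rfl | rfl | rfl <;>
            simp only [h00, h11, h22, h33, h10, h20, h30, h21, h31, h32] <;>
            simp only [div_mul_eq_mul_div, div_sub_div_same] <;> rw [eq_div_iff ha] <;>
            (first | ring1 | linear_combination hP | linear_combination -hP)
      · refine ⟨fun i => ω i 0 / ω 0 3, fun i => ω i 3, fun i j => ?_⟩
        rcases fin4_cases i with rfl | rfl | rfl | rfl <;>
          rcases fin4_cases j with rfl | rfl | rfl | rfl <;>
          simp only [h00, h11, h22, h33, h10, h20, h30, h21, h31, h32] <;>
          simp only [div_mul_eq_mul_div, div_sub_div_same] <;> rw [eq_div_iff ha] <;>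
          (first | ring1 | linear_combination hP | linear_combination -hP)
    · refine ⟨fun i => ω i 0 / ω 0 2, fun i => ω i 2, fun i j => ?_⟩
      rcases fin4_cases i with rfl | rfl | rfl | rfl <;>
        rcases fin4_cases j with rfl | rfl | rfl | rfl <;>
        simp only [h00, h11, h22, h33, h10, h20, h30, h21, h31, h32] <;>
        simp only [div_mul_eq_mul_div, div_sub_div_same] <;> rw [eq_div_iff ha] <;>
        (first | ring1 | linear_combination hP | linear_combination -hP)
  · refine ⟨fun i => ω i 0 / ω 0 1, fun i => ω i 1, fun i j => ?_⟩
    rcases fin4_cases i with rfl | rfl | rfl | rfl <;>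
      rcases fin4_cases j with rfl | rfl | rfl | rfl <;>
      simp only [h00, h11, h22, h33, h10, h20, h30, h21, h31, h32] <;>
      simp only [div_mul_eq_mul_div, div_sub_div_same] <;> rw [eq_div_iff ha] <;>
      (first | ring1 | linear_combination hP | linear_combination -hP)


/-- A reference antisymmetric matrix with `Pw = 1`. -/
noncomputable def muF : Fin 4 → Fin 4 → ℝ := ![![0,1,0,0],![-1,0,0,0],![0,0,0,1],![0,0,-1,0]]

/-- A reference antisymmetric matrix with `Pw = -1`. -/
noncomputable def nuF : Fin 4 → Fin 4 → ℝ := ![![0,1,0,0],![-1,0,0,0],![0,0,0,-1],![0,0,1,0]]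

lemma muF_as : ∀ i j, muF i j = -muF j i := by
  intro i j
  rcases fin4_cases i with rfl | rfl | rfl | rfl <;>
    rcases fin4_cases j with rfl | rfl | rfl | rfl <;> norm_num [muF, Matrix.vecHead, Matrix.vecTail, Matrix.cons_val_two, Matrix.cons_val_three]

lemma nuF_as : ∀ i j, nuF i j = -nuF j i := by
  intro i j
  rcases fin4_cases i with rfl | rfl | rfl | rfl <;>
    rcases fin4_cases j with rfl | rfl | rfl | rfl <;> norm_num [nuF, Matrix.vecHead, Matrix.vecTail, Matrix.cons_val_two, Matrix.cons_val_three]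

lemma muF_P : Pw muF = 1 := by norm_num [Pw, muF, Matrix.vecHead, Matrix.vecTail, Matrix.cons_val_two, Matrix.cons_val_three]

lemma nuF_P : Pw nuF = -1 := by norm_num [Pw, nuF, Matrix.vecHead, Matrix.vecTail, Matrix.cons_val_two, Matrix.cons_val_three]

/-- The key "rotation" lemma: if `Q ≥ 0` on the zero set of `Pw`, then
`Q a + Q b ≥ 0` whenever `Pw a = 1` and `Pw b = -1`. -/
lemma key (r : Fin 4 → Fin 4 → Fin 4 → Fin 4 → ℝ)
    (h0 : ∀ ω : Fin 4 → Fin 4 → ℝ, (∀ i j, ω i j = -ω j i) → Pw ω = 0 → 0 ≤ Qr r ω)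
    (a b : Fin 4 → Fin 4 → ℝ) (hA : ∀ i j, a i j = -a j i) (hB : ∀ i j, b i j = -b j i)
    (hPa : Pw a = 1) (hPb : Pw b = -1) : 0 ≤ Qr r a + Qr r b := by
  have hPa' : a 0 1 * a 2 3 - a 0 2 * a 1 3 + a 0 3 * a 1 2 = 1 := hPa
  have hPb' : b 0 1 * b 2 3 - b 0 2 * b 1 3 + b 0 3 * b 1 2 = -1 := hPb
  obtain ⟨c, s, hcs, hz⟩ : ∃ c s : ℝ, c ^ 2 + s ^ 2 = 1 ∧
      c ^ 2 - s ^ 2 +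
        (a 0 1 * b 2 3 + b 0 1 * a 2 3 - a 0 2 * b 1 3 - b 0 2 * a 1 3
          + a 0 3 * b 1 2 + b 0 3 * a 1 2) * (c * s) = 0 := by
    set β := a 0 1 * b 2 3 + b 0 1 * a 2 3 - a 0 2 * b 1 3 - b 0 2 * a 1 3
          + a 0 3 * b 1 2 + b 0 3 * a 1 2 with hβ
    have hq2 : Real.sqrt (β ^ 2 + 4) ^ 2 = β ^ 2 + 4 := Real.sq_sqrt (by positivity)
    set k := (-β + Real.sqrt (β ^ 2 + 4)) / 2 with hk
    have hkk : k ^ 2 + β * k - 1 = 0 := by rw [hk]; linear_combination hq2 / 4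
    have h1k : (0:ℝ) < 1 + k ^ 2 := by positivity
    have hsq : Real.sqrt (1 + k ^ 2) ^ 2 = 1 + k ^ 2 := Real.sq_sqrt h1k.le
    have hsne : Real.sqrt (1 + k ^ 2) ≠ 0 := ne_of_gt (Real.sqrt_pos.mpr h1k)
    refine ⟨k / Real.sqrt (1 + k ^ 2), 1 / Real.sqrt (1 + k ^ 2), ?_, ?_⟩
    · have e1 : (k / Real.sqrt (1 + k ^ 2)) ^ 2 + (1 / Real.sqrt (1 + k ^ 2)) ^ 2
          = (k ^ 2 + 1) / Real.sqrt (1 + k ^ 2) ^ 2 := by ring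
      rw [e1, hsq, div_eq_one_iff_eq (by positivity)]; ring
    · have e2 : (k / Real.sqrt (1 + k ^ 2)) ^ 2 - (1 / Real.sqrt (1 + k ^ 2)) ^ 2
          + β * (k / Real.sqrt (1 + k ^ 2) * (1 / Real.sqrt (1 + k ^ 2)))
          = (k ^ 2 + β * k - 1) / Real.sqrt (1 + k ^ 2) ^ 2 := by ring
      rw [e2, hkk, zero_div]
  have hu0 : ∀ i j, (fun i j => c * a i j + s * b i j) i j
      = -((fun i j => c * a i j + s * b i j) j i) := by
    intro i j; show c * a i j + s * b i j = -(c * a j i + s * b j i)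
    rw [hA i j, hB i j]; ring
  have hv0 : ∀ i j, (fun i j => s * a i j - c * b i j) i j
      = -((fun i j => s * a i j - c * b i j) j i) := by
    intro i j; show s * a i j - c * b i j = -(s * a j i - c * b j i)
    rw [hA i j, hB i j]; ring
  have hPu : Pw (fun i j => c * a i j + s * b i j) = 0 := by
    have e : Pw (fun i j => c * a i j + s * b i j)
        = (c * a 0 1 + s * b 0 1) * (c * a 2 3 + s * b 2 3)
          - (c * a 0 2 + s * b 0 2) * (c * a 1 3 + s * b 1 3)
          + (c * a 0 3 + s * b 0 3) * (c * a 1 2 + s * b 1 2) := rfl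
    rw [e]; linear_combination c ^ 2 * hPa' + s ^ 2 * hPb' + hz
  have hPv : Pw (fun i j => s * a i j - c * b i j) = 0 := by
    have e : Pw (fun i j => s * a i j - c * b i j)
        = (s * a 0 1 - c * b 0 1) * (s * a 2 3 - c * b 2 3)
          - (s * a 0 2 - c * b 0 2) * (s * a 1 3 - c * b 1 3)
          + (s * a 0 3 - c * b 0 3) * (s * a 1 2 - c * b 1 2) := rfl
    rw [e]; linear_combination s ^ 2 * hPa' + c ^ 2 * hPb' - hz
  have hQu := h0 _ hu0 hPu
  have hQv := h0 _ hv0 hPv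
  have hQp := Q_pair r a b c s
  rw [hcs, one_mul] at hQp
  have eu : Qr r (fun i j => c * a i j + s * b i j)
      = (1 / 4) * S4 (fun i j k l =>
          r i j k l * (c * a i j + s * b i j) * (c * a l k + s * b l k)) := rfl
  have ev : Qr r (fun i j => s * a i j - c * b i j)
      = (1 / 4) * S4 (fun i j k l =>
          r i j k l * (s * a i j - c * b i j) * (s * a l k - c * b l k)) := rfl
  rw [eu] at hQu
  rw [ev] at hQv
  have ea : Qr r a = (1 / 4) * S4 (fun i j k l => r i j k l * a i j * a l k) := rfl
  have eb : Qr r b = (1 / 4) * S4 (fun i j k l => r i j k l * b i j * b l k) := rfl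
  rw [ea, eb]
  linarith [hQp, hQu, hQv]

theorem finsler_thorpe_trick_nonneg
    (r : Fin 4 → Fin 4 → Fin 4 → Fin 4 → ℝ)
    (hr1 : ∀ i j k l, r i j k l = -r j i k l)
    (hr2 : ∀ i j k l, r i j k l = -r i j l k)
    (hr3 : ∀ i j k l, r i j k l = r k l i j)
    (hrb : ∀ i j k l, r i j k l + r j k i l + r k i j l = 0) :
    (∀ x y : Fin 4 → ℝ,
        0 ≤ ∑ i, ∑ j, ∑ k, ∑ l, r i j k l * x i * y j * y k * x l) ↔
      ∃ τ : ℝ, ∀ ω : Fin 4 → Fin 4 → ℝ, (∀ i j, ω i j = -ω j i) →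
        0 ≤ (1 / 4) * (∑ i, ∑ j, ∑ k, ∑ l, r i j k l * ω i j * ω l k) +
              τ * (ω 0 1 * ω 2 3 - ω 0 2 * ω 1 3 + ω 0 3 * ω 1 2) := by
  constructor
  · intro h
    have h0 : ∀ ω : Fin 4 → Fin 4 → ℝ, (∀ i j, ω i j = -ω j i) → Pw ω = 0 → 0 ≤ Qr r ω := by
      intro ω hASω hPω
      obtain ⟨x, y, hxy⟩ := plucker ω hASω hPω
      have e : Qr r ω = S4 (fun i j k l => r i j k l * x i * y j * y k * x l) := by
        unfold Qr
        rw [S4_congr (f := fun i j k l => r i j k l * ω i j * ω l k)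
          (g := fun i j k l =>
            r i j k l * (x i * y j - x j * y i) * (x l * y k - x k * y l))
          (fun i j k l => by show r i j k l * ω i j * ω l k = _; rw [hxy i j, hxy l k]),
          Q_wedge r hr1 hr2 x y]
        ring
      rw [e]; exact h x y
    set SS : Set ℝ := {t : ℝ | ∃ a : Fin 4 → Fin 4 → ℝ,
        (∀ i j, a i j = -a j i) ∧ Pw a = 1 ∧ t = -Qr r a} with hSSdef
    have hne : SS.Nonempty := ⟨-Qr r muF, muF, muF_as, muF_P, rfl⟩
    have hbdd : BddAbove SS := by
      refine ⟨Qr r nuF, ?_⟩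
      rintro t ⟨a, hAa, hPa1, rfl⟩
      have := key r h0 a nuF hAa nuF_as hPa1 nuF_P
      linarith
    refine ⟨sSup SS, ?_⟩
    intro ω hASω
    have hQdef : (1 / 4 : ℝ) * (∑ i, ∑ j, ∑ k, ∑ l, r i j k l * ω i j * ω l k) = Qr r ω := rfl
    have hPdef : ω 0 1 * ω 2 3 - ω 0 2 * ω 1 3 + ω 0 3 * ω 1 2 = Pw ω := rfl
    rw [hQdef, hPdef]
    rcases lt_trichotomy (Pw ω) 0 with hp | hp | hp
    · have hpos : (0:ℝ) < -Pw ω := by linarith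
      set t := 1 / Real.sqrt (-Pw ω) with ht
      have hs2 : Real.sqrt (-Pw ω) ^ 2 = -Pw ω := Real.sq_sqrt hpos.le
      have ht2 : t ^ 2 = 1 / (-Pw ω) := by rw [ht, div_pow, one_pow, hs2]
      have hAS' : ∀ i j, (fun i j => t * ω i j) i j = -((fun i j => t * ω i j) j i) := by
        intro i j; show t * ω i j = -(t * ω j i); rw [hASω i j]; ring
      have hP' : Pw (fun i j => t * ω i j) = -1 := by
        have e : Pw (fun i j => t * ω i j) = t ^ 2 * Pw ω := by
          show (t * ω 0 1) * (t * ω 2 3) - (t * ω 0 2) * (t * ω 1 3)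
              + (t * ω 0 3) * (t * ω 1 2) = t ^ 2 * Pw ω
          unfold Pw; ring
        rw [e, ht2, div_mul_eq_mul_div, one_mul, div_eq_iff hpos.ne']; ring
      have hQ' : Qr r (fun i j => t * ω i j) = (1 / (-Pw ω)) * Qr r ω := by
        have e : Qr r (fun i j => t * ω i j)
            = (1 / 4) * S4 (fun i j k l => r i j k l * (t * ω i j) * (t * ω l k)) := rfl
        rw [e, Q_smul, ht2]; unfold Qr; ring
      have hub : sSup SS ≤ Qr r (fun i j => t * ω i j) := by
        apply csSup_le hne
        rintro z ⟨a, hAa, hPa1, rfl⟩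
        have := key r h0 a _ hAa hAS' hPa1 hP'
        linarith
      have h2 : 0 ≤ (-Pw ω) * ((1 / (-Pw ω)) * Qr r ω - sSup SS) := by
        apply mul_nonneg hpos.le; rw [← hQ']; linarith
      have hc : (-Pw ω) * ((1 / (-Pw ω)) * Qr r ω) = Qr r ω := by
        rw [one_div, ← mul_assoc, mul_inv_cancel₀ hpos.ne', one_mul]
      have h4 : (-Pw ω) * ((1 / (-Pw ω)) * Qr r ω - sSup SS)
          = Qr r ω + sSup SS * Pw ω := by
        calc (-Pw ω) * ((1 / (-Pw ω)) * Qr r ω - sSup SS)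
            = (-Pw ω) * ((1 / (-Pw ω)) * Qr r ω) + sSup SS * Pw ω := by ring
          _ = Qr r ω + sSup SS * Pw ω := by rw [hc]
      rw [h4] at h2; exact h2
    · rw [hp, mul_zero, add_zero]; exact h0 ω hASω hp
    · set t := 1 / Real.sqrt (Pw ω) with ht
      have hs2 : Real.sqrt (Pw ω) ^ 2 = Pw ω := Real.sq_sqrt hp.le
      have ht2 : t ^ 2 = 1 / Pw ω := by rw [ht, div_pow, one_pow, hs2]
      have hAS' : ∀ i j, (fun i j => t * ω i j) i j = -((fun i j => t * ω i j) j i) := by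
        intro i j; show t * ω i j = -(t * ω j i); rw [hASω i j]; ring
      have hP' : Pw (fun i j => t * ω i j) = 1 := by
        have e : Pw (fun i j => t * ω i j) = t ^ 2 * Pw ω := by
          show (t * ω 0 1) * (t * ω 2 3) - (t * ω 0 2) * (t * ω 1 3)
              + (t * ω 0 3) * (t * ω 1 2) = t ^ 2 * Pw ω
          unfold Pw; ring
        rw [e, ht2, div_mul_eq_mul_div, one_mul, div_eq_iff hp.ne']; ring
      have hQ' : Qr r (fun i j => t * ω i j) = (1 / Pw ω) * Qr r ω := by
        have e : Qr r (fun i j => t * ω i j)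
            = (1 / 4) * S4 (fun i j k l => r i j k l * (t * ω i j) * (t * ω l k)) := rfl
        rw [e, Q_smul, ht2]; unfold Qr; ring
      have hmem : -Qr r (fun i j => t * ω i j) ∈ SS := ⟨_, hAS', hP', rfl⟩
      have hlb : -Qr r (fun i j => t * ω i j) ≤ sSup SS := le_csSup hbdd hmem
      have h2 : 0 ≤ Pw ω * ((1 / Pw ω) * Qr r ω + sSup SS) := by
        apply mul_nonneg hp.le; rw [← hQ'] at *; linarith
      have hc : Pw ω * ((1 / Pw ω) * Qr r ω) = Qr r ω := by
        rw [one_div, ← mul_assoc, mul_inv_cancel₀ hp.ne', one_mul]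
      have h4 : Pw ω * ((1 / Pw ω) * Qr r ω + sSup SS)
          = Qr r ω + sSup SS * Pw ω := by
        calc Pw ω * ((1 / Pw ω) * Qr r ω + sSup SS)
            = Pw ω * ((1 / Pw ω) * Qr r ω) + sSup SS * Pw ω := by ring
          _ = Qr r ω + sSup SS * Pw ω := by rw [hc]
      rw [h4] at h2; exact h2
  · rintro ⟨τ, hτ⟩ x y
    have hw := hτ (fun i j => x i * y j - x j * y i)
      (fun i j => by show x i * y j - x j * y i = -(x j * y i - x i * y j); ring)
    have e1 : (∑ i, ∑ j, ∑ k, ∑ l, r i j k l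
          * ((fun i j => x i * y j - x j * y i) i j)
          * ((fun i j => x i * y j - x j * y i) l k))
        = S4 (fun i j k l =>
            r i j k l * (x i * y j - x j * y i) * (x l * y k - x k * y l)) := rfl
    rw [e1, Q_wedge r hr1 hr2 x y] at hw
    have e2 : ((fun i j => x i * y j - x j * y i) : Fin 4 → Fin 4 → ℝ) 0 1
          * ((fun i j => x i * y j - x j * y i) : Fin 4 → Fin 4 → ℝ) 2 3
        - ((fun i j => x i * y j - x j * y i) : Fin 4 → Fin 4 → ℝ) 0 2
          * ((fun i j => x i * y j - x j * y i) : Fin 4 → Fin 4 → ℝ) 1 3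
        + ((fun i j => x i * y j - x j * y i) : Fin 4 → Fin 4 → ℝ) 0 3
          * ((fun i j => x i * y j - x j * y i) : Fin 4 → Fin 4 → ℝ) 1 2 = 0 := by
      show (x 0 * y 1 - x 1 * y 0) * (x 2 * y 3 - x 3 * y 2)
          - (x 0 * y 2 - x 2 * y 0) * (x 1 * y 3 - x 3 * y 1)
          + (x 0 * y 3 - x 3 * y 0) * (x 1 * y 2 - x 2 * y 1) = 0
      ring
    rw [e2, mul_zero, add_zero] at hw
    have e3 : (∑ i, ∑ j, ∑ k, ∑ l, r i j k l * x i * y j * y k * x l)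
        = S4 (fun i j k l => r i j k l * x i * y j * y k * x l) := rfl
    rw [e3]; linarith
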